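/- Let m ≥ 1 and r ≥ 1, let (W,∇) be a formally irreducible formal connection with pole order m on a nonzero free ℂ[[z]]-module W of rank r, and let π : W ⊗_{ℂ[[z]]} ℂ[[w]] → ℂ[[w]] be a surjective ℂ[[w]]-linear map satisfying π∘D = ∇_{ν̃}∘π for some ν̃ ∈ ℂ[[w]]. Then the ℂ[[z]]-linear map W → ℂ[[w]], a ↦ π(a⊗1), is injective, and its cokernel is a ℂ[[z]]-module of finite length. -/

import Mathlib

open PowerSeries TensorProduct

noncomputable section

/-- A formal connection with pole order `m` on a `ℂ[[z]]`-module `W`, written in the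
trivializing frame `dz/z^m`: an additive map `Dc : W → W` satisfying
`Dc(f • a) = (z^m * f') • a + f • Dc a`. -/
def IsFormalConnection (m : ℕ) {W : Type*} [AddCommGroup W] [Module (PowerSeries ℂ) W]
    (Dc : W →+ W) : Prop :=
  ∀ (f : PowerSeries ℂ) (a : W),
    Dc (f • a) = ((X : PowerSeries ℂ) ^ m * PowerSeries.derivative ℂ f) • a + f • Dc a

/-- The ring `ℂ[[w]]`, regarded as a `ℂ[[z]]`-algebra via `z = w^r`. -/
def Cw (_r : ℕ) : Type := PowerSeries ℂ

instance (r : ℕ) : CommRing (Cw r) := inferInstanceAs (CommRing (PowerSeries ℂ))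

/-- The substitution ring homomorphism `ℂ[[z]] → ℂ[[w]]`, `f(z) ↦ f(w^r)`. -/
noncomputable def substPow (r : ℕ) : PowerSeries ℂ →+* Cw r :=
  if h : 0 < r then
    (HahnSeries.toPowerSeries.toRingHom.comp
      ((HahnSeries.embDomainRingHom (AddMonoidHom.mulLeft r)
          (fun a b hab => Nat.eq_of_mul_eq_mul_left h (by simpa using hab))
          (fun a b => by
            simp only [AddMonoidHom.coe_mulLeft]
            exact ⟨fun hh => Nat.le_of_mul_le_mul_left hh h,
              fun hh => Nat.mul_le_mul_left _ hh⟩)).comp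
        HahnSeries.toPowerSeries.symm.toRingHom))
  else (PowerSeries.C (R := ℂ)).comp (PowerSeries.constantCoeff (R := ℂ))

noncomputable instance (r : ℕ) : Algebra (PowerSeries ℂ) (Cw r) := (substPow r).toAlgebra

/-- The element `w ∈ ℂ[[w]]`. -/
def Cw.w (r : ℕ) : Cw r := (PowerSeries.X : PowerSeries ℂ)

/-- The formal derivative `d/dw` on `ℂ[[w]]`. -/
noncomputable def Cw.deriv {r : ℕ} (f : Cw r) : Cw r :=
  (PowerSeries.derivative ℂ (show PowerSeries ℂ from f) : PowerSeries ℂ)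

/-- The coefficient of `w^n` in an element of `ℂ[[w]]`. -/
noncomputable def Cw.coeff {r : ℕ} (n : ℕ) (f : Cw r) : ℂ :=
  PowerSeries.coeff (R := ℂ) n (show PowerSeries ℂ from f)

/-- `(W,∇)` is formally irreducible if the only `∇`-invariant subbundles (submodules with
free quotient, i.e. torsion-free quotient) are `0` and `W`. -/
def FormallyIrreducible {W : Type*} [AddCommGroup W] [Module (PowerSeries ℂ) W]
    (Dc : W →+ W) : Prop :=
  ∀ p : Submodule (PowerSeries ℂ) W, Module.Free (PowerSeries ℂ) (W ⧸ p) →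
    (∀ a ∈ p, Dc a ∈ p) → p = ⊥ ∨ p = ⊤

namespace Stmt12

instance (r : ℕ) : IsDomain (Cw r) := inferInstanceAs (IsDomain (PowerSeries ℂ))
instance (r : ℕ) : Nontrivial (Cw r) := inferInstanceAs (Nontrivial (PowerSeries ℂ))
instance (r : ℕ) : Module ℂ (Cw r) := inferInstanceAs (Module ℂ (PowerSeries ℂ))
instance (r : ℕ) : Algebra ℂ (Cw r) := inferInstanceAs (Algebra ℂ (PowerSeries ℂ))

theorem embDomain_coeff' {Γ Γ' R : Type*} [PartialOrder Γ] [PartialOrder Γ'] [Zero R]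
    {f : Γ ↪o Γ'} {x : HahnSeries Γ R} {b : Γ'} {a : Γ} (hb : b = f a) :
    (HahnSeries.embDomain f x).coeff b = x.coeff a := by
  subst hb; exact HahnSeries.embDomain_coeff

theorem substPow_coeff_mul (r : ℕ) (hr : 0 < r) (f : PowerSeries ℂ) (n : ℕ) :
    PowerSeries.coeff (R := ℂ) (r * n) (show PowerSeries ℂ from substPow r f) = PowerSeries.coeff (R := ℂ) n f := by
  dsimp only
  rw [show substPow r = _ from dif_pos hr]
  simp only [RingHom.coe_comp, Function.comp_apply, RingEquiv.toRingHom_eq_coe,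
    RingEquiv.coe_toRingHom, HahnSeries.toPowerSeries_apply, PowerSeries.coeff_mk]
  exact (embDomain_coeff' (x := HahnSeries.toPowerSeries.symm f) (a := n) (by simp)).trans rfl

theorem substPow_coeff_not_dvd (r : ℕ) (hr : 0 < r) (f : PowerSeries ℂ) (k : ℕ) (h : ¬ r ∣ k) :
    PowerSeries.coeff (R := ℂ) k (show PowerSeries ℂ from substPow r f) = 0 := by
  dsimp only
  rw [show substPow r = _ from dif_pos hr]
  simp only [RingHom.coe_comp, Function.comp_apply, RingEquiv.toRingHom_eq_coe,
    RingEquiv.coe_toRingHom, HahnSeries.toPowerSeries_apply, PowerSeries.coeff_mk]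
  apply HahnSeries.embDomain_notin_range
  rintro ⟨n, hn⟩
  exact h ⟨n, by simpa using hn.symm⟩

theorem substPow_injective (r : ℕ) (hr : 0 < r) : Function.Injective (substPow r) := by
  rw [injective_iff_map_eq_zero]
  intro f hf
  ext n
  rw [← substPow_coeff_mul r hr f n, hf]
  simp [map_zero]; exact map_zero _

theorem smul_def' (r : ℕ) (c : PowerSeries ℂ) (x : Cw r) :
    c • x = (show PowerSeries ℂ from substPow r c) * (show PowerSeries ℂ from x) :=
  Algebra.smul_def c x

theorem noZeroSMulCw (r : ℕ) (hr : 0 < r) : NoZeroSMulDivisors (PowerSeries ℂ) (Cw r) := by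
  constructor
  intro c x h
  rw [smul_def' r] at h
  rcases mul_eq_zero.mp h with h | h
  · exact Or.inl (substPow_injective r hr (by simpa using h))
  · exact Or.inr h

theorem substPow_C (r : ℕ) (hr : 0 < r) (c : ℂ) :
    substPow r (PowerSeries.C (R := ℂ) c) = (show Cw r from PowerSeries.C (R := ℂ) c) := by
  have : ∀ k, PowerSeries.coeff (R := ℂ) k (show PowerSeries ℂ from substPow r (PowerSeries.C (R := ℂ) c))
      = PowerSeries.coeff (R := ℂ) k (PowerSeries.C (R := ℂ) c) := by
    intro k
    by_cases hk : r ∣ k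
    · obtain ⟨t, rfl⟩ := hk
      rw [substPow_coeff_mul r hr]
      rcases Nat.eq_zero_or_pos t with rfl | ht
      · simp
      · rw [PowerSeries.coeff_C, PowerSeries.coeff_C, if_neg (by omega), if_neg (by positivity)]
    · rw [substPow_coeff_not_dvd r hr _ _ hk, PowerSeries.coeff_C,
        if_neg (by rintro rfl; exact hk ⟨0, by simp⟩)]
  exact PowerSeries.ext this

theorem tower (r : ℕ) (hr : 0 < r) : IsScalarTower ℂ (PowerSeries ℂ) (Cw r) :=
  IsScalarTower.of_algebraMap_eq fun c => by
    rw [show algebraMap ℂ (PowerSeries ℂ) c = PowerSeries.C (R := ℂ) c from PowerSeries.algebraMap_apply.trans (by simp),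
      show (algebraMap (PowerSeries ℂ) (Cw r)) = substPow r from rfl, substPow_C r hr]
    rfl

def psi (r : ℕ) : (Fin r → PowerSeries ℂ) →ₗ[PowerSeries ℂ] Cw r where
  toFun g := ∑ i : Fin r, g i • (show Cw r from (PowerSeries.X : PowerSeries ℂ) ^ (i : ℕ))
  map_add' g h := by
    rw [← Finset.sum_add_distrib]; exact Finset.sum_congr rfl fun i _ => add_smul _ _ _
  map_smul' c g := by
    rw [RingHom.id_apply, Finset.smul_sum]; exact Finset.sum_congr rfl fun i _ => mul_smul _ _ _

theorem coeff_psi (r : ℕ) (hr : 0 < r) (g : Fin r → PowerSeries ℂ) (n : ℕ) (i : Fin r) :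
    PowerSeries.coeff (R := ℂ) (r * n + i) (show PowerSeries ℂ from psi r g)
      = PowerSeries.coeff (R := ℂ) n (g i) := by
  have key : ∀ j : Fin r, PowerSeries.coeff (R := ℂ) (r * n + i)
      (show PowerSeries ℂ from (g j • (show Cw r from (PowerSeries.X : PowerSeries ℂ) ^ (j : ℕ))))
      = if j = i then PowerSeries.coeff (R := ℂ) n (g i) else 0 := by
    intro j
    rw [smul_def' r]
    rcases le_or_gt (j : ℕ) (r * n + i) with hj | hj
    · rw [show (show PowerSeries ℂ from substPow r (g j)) * _
          = (show PowerSeries ℂ from substPow r (g j)) * PowerSeries.X ^ (j : ℕ) from rfl,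
        PowerSeries.coeff_mul_X_pow', if_pos hj]
      by_cases hij : j = i
      · subst hij
        rw [show r * n + j - j = r * n from by omega, substPow_coeff_mul r hr, if_pos rfl]
      · rw [if_neg hij, substPow_coeff_not_dvd r hr]
        rintro ⟨t, ht⟩
        have hi : (i : ℕ) < r := i.2
        have hjr : (j : ℕ) < r := j.2
        apply hij
        have h1 : r * n + i = r * t + j := by omega
        have h2 : (r * n + i) % r = (r * t + j) % r := by rw [h1]
        rw [Nat.mul_add_mod, Nat.mul_add_mod, Nat.mod_eq_of_lt hi, Nat.mod_eq_of_lt hjr] at h2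
        exact Fin.ext h2.symm
    · rw [show (show PowerSeries ℂ from substPow r (g j)) * _
          = (show PowerSeries ℂ from substPow r (g j)) * PowerSeries.X ^ (j : ℕ) from rfl,
        PowerSeries.coeff_mul_X_pow', if_neg (by omega)]
      rw [if_neg]
      rintro rfl
      omega
  calc PowerSeries.coeff (R := ℂ) (r * n + i) (show PowerSeries ℂ from psi r g)
      = ∑ j : Fin r, PowerSeries.coeff (R := ℂ) (r * n + i)
        (show PowerSeries ℂ from (g j • (show Cw r from (PowerSeries.X : PowerSeries ℂ) ^ (j : ℕ)))) := by
        rw [psi]; simp only [LinearMap.coe_mk, AddHom.coe_mk]; exact map_sum _ _ _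
    _ = _ := by
        rw [Finset.sum_congr rfl (fun j _ => key j), Finset.sum_ite_eq' Finset.univ i]
        simp

theorem psi_bijective (r : ℕ) (hr : 0 < r) : Function.Bijective (psi r) := by
  constructor
  · rw [injective_iff_map_eq_zero]
    intro g hg
    funext i
    ext n
    rw [← coeff_psi r hr g n i, hg]
    simp; exact map_zero _
  · intro f
    set g : Fin r → PowerSeries ℂ :=
      fun i => PowerSeries.mk fun n => PowerSeries.coeff (R := ℂ) (r * n + i) (show PowerSeries ℂ from f)
      with hg
    refine ⟨g, ?_⟩
    have : ∀ k, PowerSeries.coeff (R := ℂ) k (show PowerSeries ℂ from psi r g) =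
        PowerSeries.coeff (R := ℂ) k (show PowerSeries ℂ from f) := by
      intro k
      have hk : k = r * (k / r) + ((⟨k % r, Nat.mod_lt _ hr⟩ : Fin r) : ℕ) := by
        simpa using (Nat.div_add_mod k r).symm
      rw [hk, coeff_psi r hr g (k / r) ⟨k % r, Nat.mod_lt _ hr⟩, hg]
      simp
    exact PowerSeries.ext this

def basisCw (r : ℕ) (hr : 0 < r) : Module.Basis (Fin r) (PowerSeries ℂ) (Cw r) :=
  Module.Basis.ofEquivFun (LinearEquiv.ofBijective (psi r) (psi_bijective r hr)).symm

theorem coeff_sigma (s : ℕ) (v : Fin s → ℂ) (j : ℕ) (hj : j < s) :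
    PowerSeries.coeff (R := ℂ) j (∑ i : Fin s, PowerSeries.C (R := ℂ) (v i) * PowerSeries.X ^ (i : ℕ))
      = v ⟨j, hj⟩ := by
  rw [map_sum]
  rw [Finset.sum_eq_single (⟨j, hj⟩ : Fin s)]
  · simp [PowerSeries.coeff_X_pow]
  · intro b _ hb
    simp only [PowerSeries.coeff_C_mul, PowerSeries.coeff_X_pow]
    rw [if_neg, mul_zero]
    intro h; apply hb; exact Fin.ext h.symm
  · simp

end Stmt12

/-- Let `(W,∇)` be a formally irreducible formal connection with pole order
`m ≥ 1` on a nonzero free `ℂ[[z]]`-module of rank `r ≥ 1`, and let `π : W ⊗ ℂ[[w]] → ℂ[[w]]`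
be a surjective `ℂ[[w]]`-linear map intertwining the induced connection `D` with
`∇_ν̃ = d + ν̃ ω`.  Then the restriction `W → ℂ[[w]]`, `a ↦ π(a ⊗ 1)`, is injective with
cokernel of finite length over `ℂ[[z]]`. -/
theorem statement12 (m r : ℕ) (hm : 1 ≤ m) (hr : 1 ≤ r)
    (W : Type*) [AddCommGroup W] [Module (PowerSeries ℂ) W]
    [Module.Finite (PowerSeries ℂ) W] [Module.Free (PowerSeries ℂ) W] [Nontrivial W]
    (hrank : Module.finrank (PowerSeries ℂ) W = r)
    (Dc : W →+ W) (hDc : IsFormalConnection m Dc)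
    (hirr : FormallyIrreducible Dc)
    (D : Cw r ⊗[PowerSeries ℂ] W →+ Cw r ⊗[PowerSeries ℂ] W)
    (hD : ∀ (g : Cw r) (a : W),
      D (g ⊗ₜ a) = r • ((g ⊗ₜ[PowerSeries ℂ] Dc a))
        + (Cw.w r ^ (m * r - r + 1) * Cw.deriv g) ⊗ₜ a)
    (π : Cw r ⊗[PowerSeries ℂ] W →ₗ[Cw r] Cw r) (hπ : Function.Surjective π)
    (ν : Cw r)
    (hcompat : ∀ x, π (D x) =
      Cw.w r ^ (m * r - r + 1) * Cw.deriv (π x) + ν * π x) :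
    ∃ pL : W →ₗ[PowerSeries ℂ] Cw r,
      (∀ a : W, pL a = π ((1 : Cw r) ⊗ₜ a)) ∧
      Function.Injective pL ∧
      IsFiniteLength (PowerSeries ℂ) (Cw r ⧸ LinearMap.range pL) := by
  classical
  have hr0 : 0 < r := hr
  haveI := Stmt12.noZeroSMulCw r hr0
  set pL : W →ₗ[PowerSeries ℂ] Cw r :=
    (π.restrictScalars (PowerSeries ℂ)).comp ((TensorProduct.mk (PowerSeries ℂ) (Cw r) W) 1)
    with hpLdef
  have hpLa : ∀ a : W, pL a = π ((1 : Cw r) ⊗ₜ a) := fun a => rfl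
  have htm : ∀ (g : Cw r) (a : W), π (g ⊗ₜ a) = g * pL a := by
    intro g a
    have h1 : (g ⊗ₜ[PowerSeries ℂ] a) = g • ((1 : Cw r) ⊗ₜ[PowerSeries ℂ] a) := by
      rw [TensorProduct.smul_tmul', smul_eq_mul, mul_one]
    rw [h1, map_smul, smul_eq_mul, hpLa]
  -- kernel is D-invariant
  have hker : ∀ a ∈ LinearMap.ker pL, Dc a ∈ LinearMap.ker pL := by
    intro a ha
    rw [LinearMap.mem_ker, hpLa] at ha ⊢
    have h1 := hcompat ((1 : Cw r) ⊗ₜ a)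
    rw [hD 1 a] at h1
    have hder : Cw.deriv (1 : Cw r) = 0 := by
      show (PowerSeries.derivative ℂ) (1 : PowerSeries ℂ) = 0
      exact Derivation.map_one_eq_zero _
    rw [hder, mul_zero, TensorProduct.zero_tmul, add_zero, map_nsmul, ha, mul_zero] at h1
    have hder0 : Cw.deriv (0 : Cw r) = 0 := by
      show (PowerSeries.derivative ℂ) (0 : PowerSeries ℂ) = 0
      exact map_zero _
    rw [hder0, mul_zero, add_zero] at h1
    -- h1 : r • π (1 ⊗ Dc a) = 0
    have h2 : ((r : ℕ) : Cw r) * π ((1 : Cw r) ⊗ₜ Dc a) = 0 := by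
      rw [← nsmul_eq_mul]; exact h1
    rcases mul_eq_zero.mp h2 with h | h
    · exfalso
      have : PowerSeries.constantCoeff (R := ℂ) ((r : ℕ) : PowerSeries ℂ) = 0 := by
        rw [show ((r : ℕ) : PowerSeries ℂ) = (0 : PowerSeries ℂ) from h]; simp
      rw [map_natCast] at this
      exact_mod_cast absurd this (by exact_mod_cast Nat.cast_ne_zero.mpr (by omega))
    · exact h
  -- the quotient by the kernel is free
  have hfree : Module.Free (PowerSeries ℂ) (W ⧸ LinearMap.ker pL) := by
    haveI : NoZeroSMulDivisors (PowerSeries ℂ) (W ⧸ LinearMap.ker pL) := by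
      constructor
      intro c x h
      have h2 : c • (pL.quotKerEquivRange x) = 0 := by
        rw [← map_smul, h, map_zero]
      rcases smul_eq_zero.mp h2 with h | h
      · exact Or.inl h
      · exact Or.inr (by
          apply pL.quotKerEquivRange.injective
          rw [h, map_zero])
    exact Module.free_of_finite_type_torsion_free'
  rcases hirr _ hfree hker with hbot | htop
  swap
  · exfalso
    obtain ⟨x, hx⟩ := hπ 1
    have hzero : ∀ y : Cw r ⊗[PowerSeries ℂ] W, π y = 0 := by
      intro y
      induction y using TensorProduct.induction_on with
      | zero => simp
      | tmul g a =>
          have ha : a ∈ (⊤ : Submodule (PowerSeries ℂ) W) := trivial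
          rw [← htop, LinearMap.mem_ker] at ha
          rw [htm g a, ha, mul_zero]
      | add x y hx hy => rw [map_add, hx, hy, add_zero]
    have h0 := hzero x
    rw [hx] at h0
    exact one_ne_zero h0
  have hinj : Function.Injective pL := LinearMap.ker_eq_bot.mp hbot
  refine ⟨pL, hpLa, hinj, ?_⟩
  -- now the cokernel
  set N := LinearMap.range pL with hN
  obtain ⟨n, snf⟩ := N.smithNormalForm (Stmt12.basisCw r hr0)
  have hNrank : Module.finrank (PowerSeries ℂ) N = r := by
    have h2 : Module.finrank (PowerSeries ℂ) N = Module.finrank (PowerSeries ℂ) W :=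
      (LinearEquiv.ofInjective pL hinj).symm.finrank_eq
    rw [h2, hrank]
  have hn : n = r := by
    have h1 := Module.finrank_eq_card_basis snf.bN
    rw [hNrank] at h1
    simpa using h1.symm
  have hfbij : Function.Bijective snf.f :=
    (Fintype.bijective_iff_injective_and_card _).mpr ⟨snf.f.injective, by simp [hn]⟩
  have ha : ∀ i, snf.a i ≠ 0 := by
    intro i h
    have h1 := snf.snf i
    rw [h, zero_smul] at h1
    exact snf.bN.ne_zero i (by
      apply Subtype.ext
      simpa using h1)
  set c : PowerSeries ℂ := ∏ i, snf.a i with hc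
  have hc0 : c ≠ 0 := Finset.prod_ne_zero_iff.mpr fun i _ => ha i
  have hbM : ∀ j, c • snf.bM j ∈ N := by
    intro j
    obtain ⟨i, rfl⟩ := hfbij.2 j
    have h1 : c = (∏ k ∈ Finset.univ.erase i, snf.a k) * snf.a i := by
      rw [hc, ← Finset.prod_erase_mul _ _ (Finset.mem_univ i)]
    rw [h1, mul_smul, ← snf.snf i]
    exact N.smul_mem _ (snf.bN i).2
  have hcmem : ∀ x : Cw r, c • x ∈ N := by
    intro x
    have hx := Module.Basis.sum_repr snf.bM x
    rw [← hx, Finset.smul_sum]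
    apply Submodule.sum_mem
    intro j _
    rw [smul_smul, mul_comm, ← smul_smul]
    exact N.smul_mem _ (hbM j)
  -- extract a power of w
  set F : PowerSeries ℂ := (show PowerSeries ℂ from substPow r c) with hF
  have hF0 : F ≠ 0 := by
    intro h
    exact hc0 (Stmt12.substPow_injective r hr0 (by rw [map_zero]; exact h))
  set s : ℕ := F.order.lift (PowerSeries.order_finite_iff_ne_zero.mpr hF0) with hs
  have hFs : (PowerSeries.X : PowerSeries ℂ) ^ s * PowerSeries.divXPowOrder F = F := by
    have hst : s = F.order.toNat := by rw [hs]; exact ENat.lift_eq_toNat_of_lt_top _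
    rw [hst]; exact PowerSeries.X_pow_order_mul_divXPowOrder
  obtain ⟨U, hU⟩ := PowerSeries.isUnit_divided_by_X_pow_order hF0
  set u : PowerSeries ℂ := (U : PowerSeries ℂ) with hu
  set uinv : PowerSeries ℂ := ((U⁻¹ : (PowerSeries ℂ)ˣ) : PowerSeries ℂ) with huinv
  have huu : u * uinv = 1 := Units.mul_inv U
  have hXsu : (PowerSeries.X : PowerSeries ℂ) ^ s * u = F := by rw [hU]; exact hFs
  have hXs : ∀ x : PowerSeries ℂ, (show Cw r from (PowerSeries.X ^ s * x : PowerSeries ℂ)) ∈ N := by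
    intro x
    have h1 : (PowerSeries.X ^ s * x : PowerSeries ℂ) = F * (uinv * x) := by
      rw [← hXsu]
      calc (PowerSeries.X ^ s * x : PowerSeries ℂ)
          = PowerSeries.X ^ s * (u * uinv) * x := by rw [huu, mul_one]
        _ = (PowerSeries.X ^ s * u) * (uinv * x) := by ring
    have h2 : (show Cw r from (PowerSeries.X ^ s * x : PowerSeries ℂ))
        = c • (show Cw r from (uinv * x : PowerSeries ℂ)) := by
      rw [Stmt12.smul_def' r]
      exact h1
    rw [h2]
    exact hcmem _
  -- Q is finite over ℂ
  haveI := Stmt12.tower r hr0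
  set σ : (Fin s → ℂ) →ₗ[ℂ] Cw r :=
    { toFun := fun v =>
        (show Cw r from ∑ i : Fin s, PowerSeries.C (R := ℂ) (v i) * PowerSeries.X ^ (i : ℕ))
      map_add' := by
        intro v w
        show (∑ i : Fin s, PowerSeries.C (R := ℂ) ((v + w) i) * PowerSeries.X ^ (i : ℕ))
          = (∑ i : Fin s, PowerSeries.C (R := ℂ) (v i) * PowerSeries.X ^ (i : ℕ))
            + (∑ i : Fin s, PowerSeries.C (R := ℂ) (w i) * PowerSeries.X ^ (i : ℕ))
        simp only [Pi.add_apply, map_add, add_mul, Finset.sum_add_distrib]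
        exact (Finset.sum_congr rfl fun i _ => add_mul _ _ _).trans Finset.sum_add_distrib
      map_smul' := by
        intro t v
        show (∑ i : Fin s, PowerSeries.C (R := ℂ) ((t • v) i) * PowerSeries.X ^ (i : ℕ))
          = t • (∑ i : Fin s, PowerSeries.C (R := ℂ) (v i) * PowerSeries.X ^ (i : ℕ) : PowerSeries ℂ)
        rw [PowerSeries.smul_eq_C_mul]
        simp [Finset.mul_sum, mul_assoc] } with hσ
  have hsurj : Function.Surjective ((N.mkQ.restrictScalars ℂ).comp σ) := by
    intro q
    obtain ⟨f, rfl⟩ := N.mkQ_surjective q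
    refine ⟨fun i => PowerSeries.coeff (R := ℂ) (i : ℕ) (show PowerSeries ℂ from f), ?_⟩
    set v : Fin s → ℂ := fun i => PowerSeries.coeff (R := ℂ) (i : ℕ) (show PowerSeries ℂ from f) with hv
    show N.mkQ (σ v) = N.mkQ f
    rw [Submodule.mkQ_apply, Submodule.mkQ_apply, Submodule.Quotient.eq]
    have hdvd : (PowerSeries.X : PowerSeries ℂ) ^ s ∣
        ((show PowerSeries ℂ from σ v) - (show PowerSeries ℂ from f)) := by
      rw [PowerSeries.X_pow_dvd_iff]
      intro j hj
      rw [map_sub]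
      have h1 : PowerSeries.coeff (R := ℂ) j (show PowerSeries ℂ from σ v) = v ⟨j, hj⟩ :=
        Stmt12.coeff_sigma s v j hj
      rw [h1, hv]
      simp
    obtain ⟨g, hg⟩ := hdvd
    have : ((σ v - f : Cw r)) = ((PowerSeries.X ^ s * g : PowerSeries ℂ) : Cw r) := hg
    rw [this]
    exact hXs g
  haveI : Module.Finite ℂ (Cw r ⧸ N) := Module.Finite.of_surjective _ hsurj
  haveI : IsArtinian ℂ (Cw r ⧸ N) := isArtinian_of_fg_of_artinian'
  have hart : IsArtinian (PowerSeries ℂ) (Cw r ⧸ N) := isArtinian_of_tower ℂ inferInstance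
  haveI : Module.Finite (PowerSeries ℂ) (Cw r) := Module.Finite.of_basis (Stmt12.basisCw r hr0)
  haveI : IsNoetherian (PowerSeries ℂ) (Cw r) :=
    isNoetherian_of_isNoetherianRing_of_finite _ _
  have hnoeth : IsNoetherian (PowerSeries ℂ) (Cw r ⧸ N) := inferInstance
  exact isFiniteLength_iff_isNoetherian_isArtinian.mpr ⟨hnoeth, hart⟩


end
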